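/- Let P(0),…,P(K+1) and Q(0),…,Q(K+1) be arbitrary families of real symmetric n×n matrices. For any deterministic initial state x₀ ∈ ℝⁿ and any admissible disturbance ν, the solution x(k) of the mean-field stochastic difference equation satisfies the identity: Σ_{k=0}^{K} E{ [x(k)−E x(k); ν(k)−E ν(k)]ᵀ M(P,k) [x(k)−E x(k); ν(k)−E ν(k)] } + Σ_{k=0}^{K} [E x(k); E ν(k)]ᵀ S(P,Q,k) [E x(k); E ν(k)] = E[(x(K+1)−E x(K+1))ᵀ P(K+1) (x(K+1)−E x(K+1))] + (E x(K+1))ᵀ Q(K+1) (E x(K+1)) − x₀ᵀ Q(0) x₀, where M(P,k) is the 2×2 block matrix with blocks M₁₁ = −P(k)+A(k)ᵀP(k+1)A(k)+C(k)ᵀP(k+1)C(k), M₁₂ = A(k)ᵀP(k+1)B(k)+C(k)ᵀP(k+1)D(k), M₂₁ = M₁₂ᵀ, M₂₂ = B(k)ᵀP(k+1)B(k)+D(k)ᵀP(k+1)D(k), and S(P,Q,k) is the 2×2 block matrix with blocks S₁₁ = −Q(k)+𝔸(k)ᵀQ(k+1)𝔸(k)+ℂ(k)ᵀP(k+1)ℂ(k),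 S₁₂ = 𝔸(k)ᵀQ(k+1)𝔹(k)+ℂ(k)ᵀP(k+1)𝔻(k), S₂₁ = S₁₂ᵀ, S₂₂ = 𝔹(k)ᵀQ(k+1)𝔹(k)+𝔻(k)ᵀP(k+1)𝔻(k). -/

import Mathlib

open MeasureTheory ProbabilityTheory Matrix Finset

/-- The mean-field stochastic state recursion
`x(k+1) = A x + Ã E x + B ν + B̃ E ν + (C x + C̃ E x + D ν + D̃ E ν)·ω(k)`. -/
noncomputable def mfState {Ω : Type*} [MeasurableSpace Ω] (μ : Measure Ω) {n l : ℕ}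
    (A At C Ct : ℕ → Matrix (Fin n) (Fin n) ℝ)
    (B Bt D Dt : ℕ → Matrix (Fin n) (Fin l) ℝ)
    (W : ℕ → Ω → ℝ) (x0 : Fin n → ℝ) (ν : ℕ → Ω → Fin l → ℝ) :
    ℕ → Ω → Fin n → ℝ
  | 0 => fun _ => x0
  | (k+1) => fun a =>
      A k *ᵥ mfState μ A At C Ct B Bt D Dt W x0 ν k a
      + At k *ᵥ (∫ b, mfState μ A At C Ct B Bt D Dt W x0 ν k b ∂μ)
      + B k *ᵥ ν k a + Bt k *ᵥ (∫ b, ν k b ∂μ)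
      + W k a • (C k *ᵥ mfState μ A At C Ct B Bt D Dt W x0 ν k a
          + Ct k *ᵥ (∫ b, mfState μ A At C Ct B Bt D Dt W x0 ν k b ∂μ)
          + D k *ᵥ ν k a + Dt k *ᵥ (∫ b, ν k b ∂μ))

/-- Admissibility of a disturbance: square integrability and independence of the
noise `ω(k)` from the pair `(x(k), ν(k))`. -/
def mfAdmissible {Ω : Type*} [MeasurableSpace Ω] (μ : Measure Ω) {n l : ℕ} (K : ℕ)
    (W : ℕ → Ω → ℝ) (x : ℕ → Ω → Fin n → ℝ) (ν : ℕ → Ω → Fin l → ℝ) : Prop :=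
  (∀ k ≤ K, MemLp (ν k) 2 μ) ∧
  (∀ k ≤ K, IndepFun (fun a => (x k a, ν k a)) (W k) μ)

/- ## Auxiliary material -/

/-- `mulVec` as a continuous linear map. -/
noncomputable def mvCLM {p q : ℕ} (M : Matrix (Fin p) (Fin q) ℝ) :
    (Fin q → ℝ) →L[ℝ] (Fin p → ℝ) :=
  LinearMap.toContinuousLinearMap M.mulVecLin

section Aux
variable {Ω : Type*} [MeasurableSpace Ω] {μ : Measure Ω}

lemma memℒp_mulVec {q p : ℕ} (M : Matrix (Fin p) (Fin q) ℝ) {f : Ω → Fin q → ℝ}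
    (hf : MemLp f 2 μ) : MemLp (fun a => M *ᵥ f a) 2 μ :=
  (mvCLM M).comp_memLp' hf

lemma memℒp_apply {q : ℕ} {f : Ω → Fin q → ℝ} (hf : MemLp f 2 μ) (i : Fin q) :
    MemLp (fun a => f a i) 2 μ :=
  (ContinuousLinearMap.proj (R := ℝ) (φ := fun _ : Fin q => ℝ) i).comp_memLp' hf

lemma mulInt {f g : Ω → ℝ} (hf : MemLp f 2 μ) (hg : MemLp g 2 μ) :
    Integrable (fun a => f a * g a) μ := by
  have hf2 : Integrable (fun a => f a ^ 2) μ := (memLp_two_iff_integrable_sq hf.1).1 hf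
  have hg2 : Integrable (fun a => g a ^ 2) μ := (memLp_two_iff_integrable_sq hg.1).1 hg
  refine Integrable.mono' (hf2.add hg2) (hf.1.mul hg.1) (ae_of_all _ fun a => ?_)
  have h0 := sq_nonneg (|f a| - |g a|)
  have h1 : ‖f a * g a‖ = |f a| * |g a| := by rw [Real.norm_eq_abs, abs_mul]
  simp only [Pi.add_apply]
  rw [h1]
  nlinarith [h0, sq_abs (f a), sq_abs (g a)]

lemma integral_apply' {q : ℕ} {f : Ω → Fin q → ℝ} (hf : Integrable f μ) (i : Fin q) :
    (∫ a, f a ∂μ) i = ∫ a, f a i ∂μ :=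
  ((ContinuousLinearMap.proj (R := ℝ) (φ := fun _ : Fin q => ℝ) i).integral_comp_comm hf).symm

lemma dp_sum {p q : ℕ} (v : Fin p → ℝ) (M : Matrix (Fin p) (Fin q) ℝ) (w : Fin q → ℝ) :
    v ⬝ᵥ M *ᵥ w = ∑ i, ∑ j, M i j * (v i * w j) := by
  simp only [dotProduct, mulVec, Finset.mul_sum]
  exact Finset.sum_congr rfl fun i _ => Finset.sum_congr rfl fun j _ => by ring

lemma integrable_quad {p q : ℕ} (M : Matrix (Fin p) (Fin q) ℝ) {f : Ω → Fin p → ℝ}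
    {g : Ω → Fin q → ℝ} (h : ∀ i j, Integrable (fun a => f a i * g a j) μ) :
    Integrable (fun a => f a ⬝ᵥ M *ᵥ g a) μ := by
  simp only [dp_sum]
  exact integrable_finset_sum _ fun i _ => integrable_finset_sum _ fun j _ => (h i j).const_mul _

lemma integral_quad {p q : ℕ} (M : Matrix (Fin p) (Fin q) ℝ) {f : Ω → Fin p → ℝ}
    {g : Ω → Fin q → ℝ} (h : ∀ i j, Integrable (fun a => f a i * g a j) μ) :
    ∫ a, f a ⬝ᵥ M *ᵥ g a ∂μ = ∑ i, ∑ j, M i j * ∫ a, f a i * g a j ∂μ := by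
  simp only [dp_sum]
  rw [integral_finset_sum Finset.univ fun i _ =>
    integrable_finset_sum Finset.univ fun j _ => (h i j).const_mul (M i j)]
  refine Finset.sum_congr rfl fun i _ => ?_
  rw [integral_finset_sum _ fun j _ => (h i j).const_mul _]
  exact Finset.sum_congr rfl fun j _ => integral_const_mul _ _

lemma adj_dp {p q : ℕ} (M : Matrix (Fin p) (Fin q) ℝ) (v : Fin q → ℝ) (w : Fin p → ℝ) :
    v ⬝ᵥ Mᵀ *ᵥ w = (M *ᵥ v) ⬝ᵥ w := by
  rw [dotProduct_mulVec, vecMul_transpose]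

lemma block_quad {n l : ℕ} (P0 P1 P2 : Matrix (Fin n) (Fin n) ℝ)
    (hP1 : P1.IsSymm) (hP2 : P2.IsSymm)
    (A C : Matrix (Fin n) (Fin n) ℝ) (B D : Matrix (Fin n) (Fin l) ℝ)
    (y : Fin n → ℝ) (u : Fin l → ℝ) :
    (Sum.elim y u) ⬝ᵥ (Matrix.fromBlocks
      (-P0 + Aᵀ * P1 * A + Cᵀ * P2 * C) (Aᵀ * P1 * B + Cᵀ * P2 * D)
      ((Aᵀ * P1 * B + Cᵀ * P2 * D)ᵀ) (Bᵀ * P1 * B + Dᵀ * P2 * D)) *ᵥ (Sum.elim y u)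
    = -(y ⬝ᵥ P0 *ᵥ y) + (A *ᵥ y + B *ᵥ u) ⬝ᵥ P1 *ᵥ (A *ᵥ y + B *ᵥ u)
      + (C *ᵥ y + D *ᵥ u) ⬝ᵥ P2 *ᵥ (C *ᵥ y + D *ᵥ u) := by
  have hsymm1 : P1ᵀ = P1 := hP1
  have hsymm2 : P2ᵀ = P2 := hP2
  rw [fromBlocks_mulVec, sumElim_dotProduct_sumElim]
  simp only [transpose_add, transpose_mul, transpose_transpose, hsymm1, hsymm2,
    Matrix.add_mulVec, Matrix.neg_mulVec, Matrix.mulVec_add, dotProduct_add,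
    dotProduct_neg, ← Matrix.mulVec_mulVec, adj_dp, add_dotProduct,
    Sum.elim_comp_inl, Sum.elim_comp_inr]
  ring

lemma meas_lin2 {n l q : ℕ} (M : Matrix (Fin q) (Fin n) ℝ) (Bm : Matrix (Fin q) (Fin l) ℝ)
    (cx : Fin n → ℝ) (cn : Fin l → ℝ) (i : Fin q) :
    Measurable (fun p : (Fin n → ℝ) × (Fin l → ℝ) =>
      (M *ᵥ (p.1 - cx) + Bm *ᵥ (p.2 - cn)) i) := by
  simp only [Pi.add_apply, mulVec, dotProduct, Pi.sub_apply]
  refine Measurable.add ?_ ?_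
  · exact Finset.measurable_sum _ fun j _ =>
      (((measurable_pi_apply j).comp measurable_fst).sub measurable_const).const_mul _
  · exact Finset.measurable_sum _ fun j _ =>
      (((measurable_pi_apply j).comp measurable_snd).sub measurable_const).const_mul _

lemma meas_lin3 {n l q : ℕ} (M : Matrix (Fin q) (Fin n) ℝ) (Bm : Matrix (Fin q) (Fin l) ℝ)
    (cx : Fin n → ℝ) (cn : Fin l → ℝ) (c : Fin q → ℝ) (i : Fin q) :
    Measurable (fun p : (Fin n → ℝ) × (Fin l → ℝ) =>
      (M *ᵥ (p.1 - cx) + Bm *ᵥ (p.2 - cn) + c) i) := by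
  simp only [Pi.add_apply]
  exact (meas_lin2 M Bm cx cn i).add measurable_const

lemma meas_norm_sq {n l q : ℕ} (M : Matrix (Fin q) (Fin n) ℝ) (Bm : Matrix (Fin q) (Fin l) ℝ)
    (c1 c2 : Fin q → ℝ) :
    Measurable (fun p : (Fin n → ℝ) × (Fin l → ℝ) =>
      ‖M *ᵥ p.1 + c1 + Bm *ᵥ p.2 + c2‖ ^ 2) := by
  have h1 : Continuous fun p : (Fin n → ℝ) × (Fin l → ℝ) => M *ᵥ p.1 + c1 + Bm *ᵥ p.2 + c2 :=
    ((((mvCLM M).continuous.comp continuous_fst).add continuous_const).add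
      ((mvCLM Bm).continuous.comp continuous_snd)).add continuous_const
  exact (h1.norm.pow 2).measurable

lemma memℒp_smul_indep {n : ℕ} {Wf : Ω → ℝ} {z : Ω → Fin n → ℝ}
    (hW : MemLp Wf 2 μ) (hz : MemLp z 2 μ)
    (hind : IndepFun (fun a => ‖z a‖ ^ 2) (fun a => Wf a ^ 2) μ) :
    MemLp (fun a => Wf a • z a) 2 μ := by
  have hsm : AEStronglyMeasurable (fun a => Wf a • z a) μ := hW.1.smul hz.1
  rw [memLp_two_iff_integrable_sq_norm hsm]
  have h1 : Integrable (fun a => ‖z a‖ ^ 2) μ :=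
    (memLp_two_iff_integrable_sq_norm hz.1).1 hz
  have h2 : Integrable (fun a => Wf a ^ 2) μ :=
    (memLp_two_iff_integrable_sq hW.1).1 hW
  have h3 : Integrable ((fun a => ‖z a‖ ^ 2) * fun a => Wf a ^ 2) μ :=
    hind.integrable_mul h1 h2
  refine h3.congr (ae_of_all _ fun a => ?_)
  simp only [Pi.mul_apply]
  rw [norm_smul, mul_pow, Real.norm_eq_abs, sq_abs, mul_comm]

end Aux

/-- Lemma 2.2 of the paper.  For arbitrary families of symmetric
matrices `P(0),…,P(K+1)`, `Q(0),…,Q(K+1)`, any deterministic `x₀` and any admissible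
disturbance `ν`, the quadratic sums built from the block matrices `M(P,k)` and
`S(P,Q,k)` telescope to the terminal terms. -/
theorem mf_lemma22 {Ω : Type*} [MeasurableSpace Ω] (μ : Measure Ω) [IsProbabilityMeasure μ]
    (K n l : ℕ)
    (A At C Ct : ℕ → Matrix (Fin n) (Fin n) ℝ)
    (B Bt D Dt : ℕ → Matrix (Fin n) (Fin l) ℝ)
    (W : ℕ → Ω → ℝ)
    (hW2 : ∀ k ≤ K, MemLp (W k) 2 μ)
    (hWmean : ∀ k ≤ K, ∫ a, W k a ∂μ = 0)
    (hWcov : ∀ s ≤ K, ∀ t ≤ K, ∫ a, W s a * W t a ∂μ = if s = t then (1:ℝ) else 0)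
    (P Q : ℕ → Matrix (Fin n) (Fin n) ℝ)
    (hP : ∀ k ≤ K + 1, (P k).IsSymm) (hQ : ∀ k ≤ K + 1, (Q k).IsSymm)
    (x0 : Fin n → ℝ) (ν : ℕ → Ω → Fin l → ℝ)
    (x : ℕ → Ω → Fin n → ℝ)
    (hx : x = mfState μ A At C Ct B Bt D Dt W x0 ν)
    (hadm : mfAdmissible μ K W x ν) :
    (∑ k ∈ Finset.range (K + 1), ∫ a,
        (Sum.elim (x k a - ∫ b, x k b ∂μ) (ν k a - ∫ b, ν k b ∂μ)) ⬝ᵥ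
          (Matrix.fromBlocks
            (-(P k) + (A k)ᵀ * P (k+1) * A k + (C k)ᵀ * P (k+1) * C k)
            ((A k)ᵀ * P (k+1) * B k + (C k)ᵀ * P (k+1) * D k)
            (((A k)ᵀ * P (k+1) * B k + (C k)ᵀ * P (k+1) * D k)ᵀ)
            ((B k)ᵀ * P (k+1) * B k + (D k)ᵀ * P (k+1) * D k)) *ᵥ
          (Sum.elim (x k a - ∫ b, x k b ∂μ) (ν k a - ∫ b, ν k b ∂μ)) ∂μ)
    + (∑ k ∈ Finset.range (K + 1),
        (Sum.elim (∫ b, x k b ∂μ) (∫ b, ν k b ∂μ)) ⬝ᵥ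
          (Matrix.fromBlocks
            (-(Q k) + (A k + At k)ᵀ * Q (k+1) * (A k + At k)
              + (C k + Ct k)ᵀ * P (k+1) * (C k + Ct k))
            ((A k + At k)ᵀ * Q (k+1) * (B k + Bt k)
              + (C k + Ct k)ᵀ * P (k+1) * (D k + Dt k))
            (((A k + At k)ᵀ * Q (k+1) * (B k + Bt k)
              + (C k + Ct k)ᵀ * P (k+1) * (D k + Dt k))ᵀ)
            ((B k + Bt k)ᵀ * Q (k+1) * (B k + Bt k)
              + (D k + Dt k)ᵀ * P (k+1) * (D k + Dt k))) *ᵥ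
          (Sum.elim (∫ b, x k b ∂μ) (∫ b, ν k b ∂μ)))
    = (∫ a, (x (K+1) a - ∫ b, x (K+1) b ∂μ) ⬝ᵥ (P (K+1)) *ᵥ (x (K+1) a - ∫ b, x (K+1) b ∂μ) ∂μ)
      + (∫ b, x (K+1) b ∂μ) ⬝ᵥ (Q (K+1)) *ᵥ (∫ b, x (K+1) b ∂μ)
      - x0 ⬝ᵥ (Q 0) *ᵥ x0 := by
  have hx0 : x 0 = fun _ => x0 := by rw [hx]; rfl
  have hrec0 : ∀ k, x (k+1) = fun a =>
      A k *ᵥ x k a + At k *ᵥ (∫ b, x k b ∂μ) + B k *ᵥ ν k a + Bt k *ᵥ (∫ b, ν k b ∂μ)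
      + W k a • (C k *ᵥ x k a + Ct k *ᵥ (∫ b, x k b ∂μ)
          + D k *ᵥ ν k a + Dt k *ᵥ (∫ b, ν k b ∂μ)) := by
    intro k; rw [hx]; rfl
  have hν2 := hadm.1
  have hind0 := hadm.2
  -- square integrability of the state
  have hX2 : ∀ k, k ≤ K + 1 → MemLp (x k) 2 μ := by
    intro k
    induction k with
    | zero => intro _; rw [hx0]; exact memLp_const x0
    | succ k ih =>
      intro hk1
      have hk : k ≤ K := by omega
      have hxk := ih (by omega)
      have hνk := hν2 k hk
      have hz' : MemLp (fun a => C k *ᵥ x k a + Ct k *ᵥ (∫ b, x k b ∂μ)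
          + D k *ᵥ ν k a + Dt k *ᵥ (∫ b, ν k b ∂μ)) 2 μ :=
        (((memℒp_mulVec _ hxk).add (memLp_const _)).add (memℒp_mulVec _ hνk)).add
          (memLp_const _)
      have hiz : IndepFun (fun a => ‖C k *ᵥ x k a + Ct k *ᵥ (∫ b, x k b ∂μ)
          + D k *ᵥ ν k a + Dt k *ᵥ (∫ b, ν k b ∂μ)‖ ^ 2) (fun a => W k a ^ 2) μ := by
        exact (hind0 k hk).comp
          (meas_norm_sq (C k) (D k) (Ct k *ᵥ (∫ b, x k b ∂μ)) (Dt k *ᵥ (∫ b, ν k b ∂μ)))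
          (measurable_id.pow_const 2)
      have hsmul := memℒp_smul_indep (hW2 k hk) hz' hiz
      rw [hrec0 k]
      exact ((((memℒp_mulVec _ hxk).add (memLp_const _)).add (memℒp_mulVec _ hνk)).add
        (memLp_const _)).add hsmul
  -- the per-step identity
  have step : ∀ k, k ≤ K →
      (∫ a, (Sum.elim (x k a - ∫ b, x k b ∂μ) (ν k a - ∫ b, ν k b ∂μ)) ⬝ᵥ
          (Matrix.fromBlocks
            (-(P k) + (A k)ᵀ * P (k+1) * A k + (C k)ᵀ * P (k+1) * C k)
            ((A k)ᵀ * P (k+1) * B k + (C k)ᵀ * P (k+1) * D k)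
            (((A k)ᵀ * P (k+1) * B k + (C k)ᵀ * P (k+1) * D k)ᵀ)
            ((B k)ᵀ * P (k+1) * B k + (D k)ᵀ * P (k+1) * D k)) *ᵥ
          (Sum.elim (x k a - ∫ b, x k b ∂μ) (ν k a - ∫ b, ν k b ∂μ)) ∂μ)
      + ((Sum.elim (∫ b, x k b ∂μ) (∫ b, ν k b ∂μ)) ⬝ᵥ
          (Matrix.fromBlocks
            (-(Q k) + (A k + At k)ᵀ * Q (k+1) * (A k + At k)
              + (C k + Ct k)ᵀ * P (k+1) * (C k + Ct k))
            ((A k + At k)ᵀ * Q (k+1) * (B k + Bt k)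
              + (C k + Ct k)ᵀ * P (k+1) * (D k + Dt k))
            (((A k + At k)ᵀ * Q (k+1) * (B k + Bt k)
              + (C k + Ct k)ᵀ * P (k+1) * (D k + Dt k))ᵀ)
            ((B k + Bt k)ᵀ * Q (k+1) * (B k + Bt k)
              + (D k + Dt k)ᵀ * P (k+1) * (D k + Dt k))) *ᵥ
          (Sum.elim (∫ b, x k b ∂μ) (∫ b, ν k b ∂μ)))
      = ((∫ a, (x (k+1) a - ∫ b, x (k+1) b ∂μ) ⬝ᵥ P (k+1) *ᵥ
            (x (k+1) a - ∫ b, x (k+1) b ∂μ) ∂μ)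
          + (∫ b, x (k+1) b ∂μ) ⬝ᵥ Q (k+1) *ᵥ (∫ b, x (k+1) b ∂μ))
        - ((∫ a, (x k a - ∫ b, x k b ∂μ) ⬝ᵥ P k *ᵥ (x k a - ∫ b, x k b ∂μ) ∂μ)
          + (∫ b, x k b ∂μ) ⬝ᵥ Q k *ᵥ (∫ b, x k b ∂μ)) := by
    intro k hk
    have hxk : MemLp (x k) 2 μ := hX2 k (by omega)
    have hxk1 : MemLp (x (k+1)) 2 μ := hX2 (k+1) (by omega)
    have hνk : MemLp (ν k) 2 μ := hν2 k hk
    have hxint : Integrable (x k) μ := hxk.integrable one_le_two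
    have hνint : Integrable (ν k) μ := hνk.integrable one_le_two
    have hxint1 : Integrable (x (k+1)) μ := hxk1.integrable one_le_two
    set xbm : Fin n → ℝ := ∫ b, x k b ∂μ with hxbm
    set nbm : Fin l → ℝ := ∫ b, ν k b ∂μ with hnbm
    set xbm' : Fin n → ℝ := ∫ b, x (k+1) b ∂μ with hxbm'
    set ys : Ω → Fin n → ℝ := fun a => x k a - xbm with hys
    set us : Ω → Fin l → ℝ := fun a => ν k a - nbm with hus
    set ss : Ω → Fin n → ℝ := fun a => A k *ᵥ ys a + B k *ᵥ us a with hss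
    set ts : Ω → Fin n → ℝ := fun a => C k *ᵥ ys a + D k *ᵥ us a with hts
    set w0 : Fin n → ℝ := (C k + Ct k) *ᵥ xbm + (D k + Dt k) *ᵥ nbm with hw0
    set m0 : Fin n → ℝ := (A k + At k) *ᵥ xbm + (B k + Bt k) *ᵥ nbm with hm0
    set zs : Ω → Fin n → ℝ := fun a => ts a + w0 with hzs
    have hmy : MemLp ys 2 μ := hxk.sub (memLp_const _)
    have hmu : MemLp us 2 μ := hνk.sub (memLp_const _)
    have hms : MemLp ss 2 μ := (memℒp_mulVec _ hmy).add (memℒp_mulVec _ hmu)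
    have hmt : MemLp ts 2 μ := (memℒp_mulVec _ hmy).add (memℒp_mulVec _ hmu)
    have hmz : MemLp zs 2 μ := hmt.add (memLp_const _)
    have hWk : Integrable (W k) μ := (hW2 k hk).integrable one_le_two
    have hWksq : Integrable (fun a => W k a * W k a) μ := by
      have h := (memLp_two_iff_integrable_sq (hW2 k hk).1).1 (hW2 k hk)
      exact h.congr (ae_of_all _ fun a => by ring)
    have hWsqint : ∫ a, W k a * W k a ∂μ = 1 := by simpa using hWcov k hk k hk
    -- zero means
    have hy0 : ∀ i, ∫ a, ys a i ∂μ = 0 := by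
      intro i
      have h1 : Integrable (fun a => x k a i) μ := (memℒp_apply hxk i).integrable one_le_two
      have e0 : (fun a => ys a i) = fun a => x k a i - xbm i := rfl
      have e2 : xbm i = ∫ a, x k a i ∂μ := by rw [hxbm]; exact integral_apply' hxint i
      rw [e0, integral_sub h1 (integrable_const _), integral_const]
      simp [measure_univ, e2]
    have hu0 : ∀ i, ∫ a, us a i ∂μ = 0 := by
      intro i
      have h1 : Integrable (fun a => ν k a i) μ := (memℒp_apply hνk i).integrable one_le_two
      have e0 : (fun a => us a i) = fun a => ν k a i - nbm i := rfl
      have e2 : nbm i = ∫ a, ν k a i ∂μ := by rw [hnbm]; exact integral_apply' hνint i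
      rw [e0, integral_sub h1 (integrable_const _), integral_const]
      simp [measure_univ, e2]
    have hs0 : ∀ i, ∫ a, ss a i ∂μ = 0 := by
      intro i
      have e : (fun a => ss a i)
          = fun a => (∑ j, A k i j * ys a j) + ∑ j, B k i j * us a j := by
        funext a; simp [hss, mulVec, dotProduct]
      have intA : Integrable (fun a => ∑ j, A k i j * ys a j) μ :=
        integrable_finset_sum _ fun j _ =>
          ((memℒp_apply hmy j).integrable one_le_two).const_mul _
      have intB : Integrable (fun a => ∑ j, B k i j * us a j) μ :=
        integrable_finset_sum _ fun j _ =>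
          ((memℒp_apply hmu j).integrable one_le_two).const_mul _
      rw [e, integral_add intA intB,
        integral_finset_sum _ (fun j _ =>
          ((memℒp_apply hmy j).integrable one_le_two).const_mul _),
        integral_finset_sum _ (fun j _ =>
          ((memℒp_apply hmu j).integrable one_le_two).const_mul _)]
      simp [integral_const_mul, hy0, hu0]
    have ht0 : ∀ i, ∫ a, ts a i ∂μ = 0 := by
      intro i
      have e : (fun a => ts a i)
          = fun a => (∑ j, C k i j * ys a j) + ∑ j, D k i j * us a j := by
        funext a; simp [hts, mulVec, dotProduct]
      have intA : Integrable (fun a => ∑ j, C k i j * ys a j) μ :=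
        integrable_finset_sum _ fun j _ =>
          ((memℒp_apply hmy j).integrable one_le_two).const_mul _
      have intB : Integrable (fun a => ∑ j, D k i j * us a j) μ :=
        integrable_finset_sum _ fun j _ =>
          ((memℒp_apply hmu j).integrable one_le_two).const_mul _
      rw [e, integral_add intA intB,
        integral_finset_sum _ (fun j _ =>
          ((memℒp_apply hmy j).integrable one_le_two).const_mul _),
        integral_finset_sum _ (fun j _ =>
          ((memℒp_apply hmu j).integrable one_le_two).const_mul _)]
      simp [integral_const_mul, hy0, hu0]
    -- independence
    have hIW := hind0 k hk
    have hindz : ∀ i, IndepFun (fun a => zs a i) (W k) μ := fun i =>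
      hIW.comp (meas_lin3 (C k) (D k) xbm nbm w0 i) measurable_id
    have hindsz : ∀ i j, IndepFun (fun a => ss a i * zs a j) (W k) μ := fun i j =>
      hIW.comp ((meas_lin2 (A k) (B k) xbm nbm i).mul
        (meas_lin3 (C k) (D k) xbm nbm w0 j)) measurable_id
    have hindzs : ∀ i j, IndepFun (fun a => zs a i * ss a j) (W k) μ := fun i j =>
      hIW.comp ((meas_lin3 (C k) (D k) xbm nbm w0 i).mul
        (meas_lin2 (A k) (B k) xbm nbm j)) measurable_id
    have hindzz : ∀ i j, IndepFun (fun a => zs a i * zs a j)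
        (fun a => W k a * W k a) μ := fun i j =>
      hIW.comp ((meas_lin3 (C k) (D k) xbm nbm w0 i).mul
        (meas_lin3 (C k) (D k) xbm nbm w0 j)) (measurable_id.mul measurable_id)
    -- product integrabilities
    have ipy : ∀ (i j : Fin n), Integrable (fun a => ys a i * ys a j) μ := fun i j =>
      mulInt (memℒp_apply hmy i) (memℒp_apply hmy j)
    have ips : ∀ (i j : Fin n), Integrable (fun a => ss a i * ss a j) μ := fun i j =>
      mulInt (memℒp_apply hms i) (memℒp_apply hms j)
    have ipt : ∀ (i j : Fin n), Integrable (fun a => ts a i * ts a j) μ := fun i j =>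
      mulInt (memℒp_apply hmt i) (memℒp_apply hmt j)
    have ipsz : ∀ (i j : Fin n), Integrable (fun a => ss a i * zs a j) μ := fun i j =>
      mulInt (memℒp_apply hms i) (memℒp_apply hmz j)
    have ipzs : ∀ (i j : Fin n), Integrable (fun a => zs a i * ss a j) μ := fun i j =>
      mulInt (memℒp_apply hmz i) (memℒp_apply hms j)
    have ipzz : ∀ (i j : Fin n), Integrable (fun a => zs a i * zs a j) μ := fun i j =>
      mulInt (memℒp_apply hmz i) (memℒp_apply hmz j)
    -- independence-based integral values
    have hWzero : ∀ (g : Ω → ℝ), Integrable g μ → IndepFun g (W k) μ →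
        ∫ a, g a * W k a ∂μ = 0 := by
      intro g hg hgi
      have h : ∫ a, g a * W k a ∂μ = (∫ a, g a ∂μ) * ∫ a, W k a ∂μ :=
        hgi.integral_mul_eq_mul_integral hg.1 hWk.1
      rw [h, hWmean k hk, mul_zero]
    have hWWone : ∀ (g : Ω → ℝ), Integrable g μ → IndepFun g (fun a => W k a * W k a) μ →
        ∫ a, g a * (W k a * W k a) ∂μ = ∫ a, g a ∂μ := by
      intro g hg hgi
      have h : ∫ a, g a * (W k a * W k a) ∂μ = (∫ a, g a ∂μ) * ∫ a, W k a * W k a ∂μ :=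
        hgi.integral_mul_eq_mul_integral hg.1 hWksq.1
      rw [h, hWsqint, mul_one]
    -- the recursion in centered form
    have hzz : ∀ a, C k *ᵥ x k a + Ct k *ᵥ xbm + D k *ᵥ ν k a + Dt k *ᵥ nbm = zs a := by
      intro a
      show _ = (C k *ᵥ (x k a - xbm) + D k *ᵥ (ν k a - nbm))
        + ((C k + Ct k) *ᵥ xbm + (D k + Dt k) *ᵥ nbm)
      simp only [Matrix.mulVec_sub, Matrix.add_mulVec]
      abel
    have hrec : x (k+1) = fun a => ss a + m0 + W k a • zs a := by
      rw [hrec0 k]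
      funext a
      rw [hzz a]
      show _ = (A k *ᵥ (x k a - xbm) + B k *ᵥ (ν k a - nbm))
        + ((A k + At k) *ᵥ xbm + (B k + Bt k) *ᵥ nbm) + W k a • zs a
      simp only [Matrix.mulVec_sub, Matrix.add_mulVec]
      abel
    -- mean of the next state
    have hmean1 : xbm' = m0 := by
      rw [hxbm']
      funext i
      rw [integral_apply' hxint1 i]
      have e : (fun a => x (k+1) a i) = fun a => ss a i + m0 i + zs a i * W k a := by
        funext a
        rw [hrec]
        simp only [Pi.add_apply, Pi.smul_apply, smul_eq_mul]
        ring
      have i1 : Integrable (fun a => ss a i) μ := (memℒp_apply hms i).integrable one_le_two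
      have i2 : Integrable (fun a => zs a i * W k a) μ :=
        (hindz i).integrable_mul ((memℒp_apply hmz i).integrable one_le_two) hWk
      have i12 : Integrable (fun a => ss a i + m0 i) μ := i1.add (integrable_const _)
      rw [e, integral_add i12 i2, integral_add i1 (integrable_const _),
        hs0 i, hWzero _ ((memℒp_apply hmz i).integrable one_le_two) (hindz i),
        integral_const]
      simp [measure_univ]
    -- covariance of the centered next state
    have hcent : ∀ a, x (k+1) a - xbm' = ss a + W k a • zs a := by
      intro a
      rw [hmean1, hrec]
      show ss a + m0 + W k a • zs a - m0 = _
      abel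
    have hgm : MemLp (fun a => ss a + W k a • zs a) 2 μ := by
      rw [show (fun a => ss a + W k a • zs a) = fun a => x (k+1) a - xbm'
        from funext fun a => (hcent a).symm]
      exact hxk1.sub (memLp_const _)
    have hcov : ∀ i j, ∫ a, (ss a + W k a • zs a) i * (ss a + W k a • zs a) j ∂μ
        = (∫ a, ss a i * ss a j ∂μ) + ((∫ a, ts a i * ts a j ∂μ) + w0 i * w0 j) := by
      intro i j
      have e : (fun a => (ss a + W k a • zs a) i * (ss a + W k a • zs a) j)
          = fun a => ss a i * ss a j + (ss a i * zs a j * W k a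
            + (zs a i * ss a j * W k a + zs a i * zs a j * (W k a * W k a))) := by
        funext a
        simp only [Pi.add_apply, Pi.smul_apply, smul_eq_mul]
        ring
      have i2 : Integrable (fun a => ss a i * zs a j * W k a) μ :=
        (hindsz i j).integrable_mul (ipsz i j) hWk
      have i3 : Integrable (fun a => zs a i * ss a j * W k a) μ :=
        (hindzs i j).integrable_mul (ipzs i j) hWk
      have i4 : Integrable (fun a => zs a i * zs a j * (W k a * W k a)) μ :=
        (hindzz i j).integrable_mul (ipzz i j) hWksq
      have i34 : Integrable (fun a => zs a i * ss a j * W k a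
          + zs a i * zs a j * (W k a * W k a)) μ := i3.add i4
      have i234 : Integrable (fun a => ss a i * zs a j * W k a
          + (zs a i * ss a j * W k a + zs a i * zs a j * (W k a * W k a))) μ := i2.add i34
      rw [e, integral_add (ips i j) i234, integral_add i2 i34,
        integral_add i3 i4, hWzero _ (ipsz i j) (hindsz i j),
        hWzero _ (ipzs i j) (hindzs i j), hWWone _ (ipzz i j) (hindzz i j)]
      have e2 : (fun a => zs a i * zs a j)
          = fun a => ts a i * ts a j + (ts a i * w0 j + (w0 i * ts a j + w0 i * w0 j)) := by
        funext a
        show (ts a + w0) i * (ts a + w0) j = _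
        simp only [Pi.add_apply]
        ring
      have j2 : Integrable (fun a => ts a i * w0 j) μ :=
        ((memℒp_apply hmt i).integrable one_le_two).mul_const _
      have j3 : Integrable (fun a => w0 i * ts a j) μ :=
        ((memℒp_apply hmt j).integrable one_le_two).const_mul _
      have j34 : Integrable (fun a => w0 i * ts a j + w0 i * w0 j) μ :=
        j3.add (integrable_const _)
      have j234 : Integrable (fun a => ts a i * w0 j + (w0 i * ts a j + w0 i * w0 j)) μ :=
        j2.add j34
      rw [e2, integral_add (ipt i j) j234, integral_add j2 j34,
        integral_add j3 (integrable_const _),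
        integral_mul_const, integral_const_mul, ht0 i, ht0 j, integral_const]
      simp [measure_univ]
    -- value of the P-term at k+1
    have hprod : ∀ i j, Integrable
        (fun a => (ss a + W k a • zs a) i * (ss a + W k a • zs a) j) μ := fun i j =>
      mulInt (memℒp_apply hgm i) (memℒp_apply hgm j)
    have hEP : ∫ a, (x (k+1) a - xbm') ⬝ᵥ P (k+1) *ᵥ (x (k+1) a - xbm') ∂μ
        = (∫ a, ss a ⬝ᵥ P (k+1) *ᵥ ss a ∂μ)
          + ((∫ a, ts a ⬝ᵥ P (k+1) *ᵥ ts a ∂μ) + w0 ⬝ᵥ P (k+1) *ᵥ w0) := by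
      simp only [hcent]
      rw [integral_quad _ hprod]
      calc ∑ i, ∑ j, P (k+1) i j * ∫ a, (ss a + W k a • zs a) i * (ss a + W k a • zs a) j ∂μ
          = ∑ i, ∑ j, (P (k+1) i j * ∫ a, ss a i * ss a j ∂μ
            + (P (k+1) i j * ∫ a, ts a i * ts a j ∂μ + P (k+1) i j * (w0 i * w0 j))) :=
            Finset.sum_congr rfl fun i _ => Finset.sum_congr rfl fun j _ => by
              rw [hcov i j]; ring
        _ = (∑ i, ∑ j, P (k+1) i j * ∫ a, ss a i * ss a j ∂μ)
            + ((∑ i, ∑ j, P (k+1) i j * ∫ a, ts a i * ts a j ∂μ)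
              + ∑ i, ∑ j, P (k+1) i j * (w0 i * w0 j)) := by
            simp only [Finset.sum_add_distrib]
        _ = (∫ a, ss a ⬝ᵥ P (k+1) *ᵥ ss a ∂μ)
            + ((∫ a, ts a ⬝ᵥ P (k+1) *ᵥ ts a ∂μ) + w0 ⬝ᵥ P (k+1) *ᵥ w0) := by
            rw [← integral_quad _ ips, ← integral_quad _ ipt, ← dp_sum]
    -- the first (stochastic) term
    have hT1 : (∫ a, (Sum.elim (x k a - xbm) (ν k a - nbm)) ⬝ᵥ
          (Matrix.fromBlocks
            (-(P k) + (A k)ᵀ * P (k+1) * A k + (C k)ᵀ * P (k+1) * C k)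
            ((A k)ᵀ * P (k+1) * B k + (C k)ᵀ * P (k+1) * D k)
            (((A k)ᵀ * P (k+1) * B k + (C k)ᵀ * P (k+1) * D k)ᵀ)
            ((B k)ᵀ * P (k+1) * B k + (D k)ᵀ * P (k+1) * D k)) *ᵥ
          (Sum.elim (x k a - xbm) (ν k a - nbm)) ∂μ)
        = -(∫ a, (x k a - xbm) ⬝ᵥ P k *ᵥ (x k a - xbm) ∂μ)
          + (∫ a, ss a ⬝ᵥ P (k+1) *ᵥ ss a ∂μ) + (∫ a, ts a ⬝ᵥ P (k+1) *ᵥ ts a ∂μ) := by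
      have e : ∀ a, (Sum.elim (x k a - xbm) (ν k a - nbm)) ⬝ᵥ
          (Matrix.fromBlocks
            (-(P k) + (A k)ᵀ * P (k+1) * A k + (C k)ᵀ * P (k+1) * C k)
            ((A k)ᵀ * P (k+1) * B k + (C k)ᵀ * P (k+1) * D k)
            (((A k)ᵀ * P (k+1) * B k + (C k)ᵀ * P (k+1) * D k)ᵀ)
            ((B k)ᵀ * P (k+1) * B k + (D k)ᵀ * P (k+1) * D k)) *ᵥ
          (Sum.elim (x k a - xbm) (ν k a - nbm))
          = -((x k a - xbm) ⬝ᵥ P k *ᵥ (x k a - xbm))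
            + ss a ⬝ᵥ P (k+1) *ᵥ ss a + ts a ⬝ᵥ P (k+1) *ᵥ ts a := fun a =>
        block_quad (P k) (P (k+1)) (P (k+1)) (hP (k+1) (by omega)) (hP (k+1) (by omega))
          (A k) (C k) (B k) (D k) (x k a - xbm) (ν k a - nbm)
      simp only [e]
      have iy : Integrable (fun a => (x k a - xbm) ⬝ᵥ P k *ᵥ (x k a - xbm)) μ :=
        integrable_quad _ ipy
      have is' : Integrable (fun a => ss a ⬝ᵥ P (k+1) *ᵥ ss a) μ := integrable_quad _ ips
      have it' : Integrable (fun a => ts a ⬝ᵥ P (k+1) *ᵥ ts a) μ := integrable_quad _ ipt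
      have iny : Integrable (fun a => -((x k a - xbm) ⬝ᵥ P k *ᵥ (x k a - xbm))) μ := iy.neg
      have inys : Integrable (fun a => -((x k a - xbm) ⬝ᵥ P k *ᵥ (x k a - xbm))
          + ss a ⬝ᵥ P (k+1) *ᵥ ss a) μ := iny.add is'
      rw [integral_add inys it', integral_add iny is', integral_neg]
    -- the second (deterministic) term
    have hT2 : (Sum.elim xbm nbm) ⬝ᵥ
          (Matrix.fromBlocks
            (-(Q k) + (A k + At k)ᵀ * Q (k+1) * (A k + At k)
              + (C k + Ct k)ᵀ * P (k+1) * (C k + Ct k))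
            ((A k + At k)ᵀ * Q (k+1) * (B k + Bt k)
              + (C k + Ct k)ᵀ * P (k+1) * (D k + Dt k))
            (((A k + At k)ᵀ * Q (k+1) * (B k + Bt k)
              + (C k + Ct k)ᵀ * P (k+1) * (D k + Dt k))ᵀ)
            ((B k + Bt k)ᵀ * Q (k+1) * (B k + Bt k)
              + (D k + Dt k)ᵀ * P (k+1) * (D k + Dt k))) *ᵥ
          (Sum.elim xbm nbm)
        = -(xbm ⬝ᵥ Q k *ᵥ xbm) + m0 ⬝ᵥ Q (k+1) *ᵥ m0 + w0 ⬝ᵥ P (k+1) *ᵥ w0 :=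
      block_quad (Q k) (Q (k+1)) (P (k+1)) (hQ (k+1) (by omega)) (hP (k+1) (by omega))
        (A k + At k) (C k + Ct k) (B k + Bt k) (D k + Dt k) xbm nbm
    rw [hT1, hT2, hEP, hmean1]
    ring
  -- assemble: telescoping sum
  rw [← Finset.sum_add_distrib]
  have hsum : ∑ k ∈ Finset.range (K + 1), _ = _ :=
    Finset.sum_congr rfl fun k hk => step k (Nat.lt_succ_iff.mp (Finset.mem_range.mp hk))
  rw [hsum, Finset.sum_range_sub (fun j =>
    (∫ a, (x j a - ∫ b, x j b ∂μ) ⬝ᵥ P j *ᵥ (x j a - ∫ b, x j b ∂μ) ∂μ)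
      + (∫ b, x j b ∂μ) ⬝ᵥ Q j *ᵥ (∫ b, x j b ∂μ))]
  have h0 : (∫ b, x 0 b ∂μ) = x0 := by rw [hx0]; simp
  have hV0 : (∫ a, (x 0 a - ∫ b, x 0 b ∂μ) ⬝ᵥ P 0 *ᵥ (x 0 a - ∫ b, x 0 b ∂μ) ∂μ)
      + (∫ b, x 0 b ∂μ) ⬝ᵥ Q 0 *ᵥ (∫ b, x 0 b ∂μ) = x0 ⬝ᵥ Q 0 *ᵥ x0 := by
    simp [hx0, h0, sub_self]
  rw [hV0]
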